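/- Under the split Bregman iteration setting, suppose β* ∈ ℝ^p is a global minimizer of Φ(β) = V(β) + λ₁‖β‖₁ + λ₂‖Lβ‖₁, and let h* ∈ ∂V(β*), p* ∈ ∂‖·‖₁(β*), q* ∈ ∂‖·‖₁(Lβ*) satisfy h* + λ₁p* + λ₂Lᵀq* = 0. Set a* = β*, b* = Lβ*, u* = λ₁p*, v* = λ₂q*. Then every term ⟨h^{k+1} − h*, β^{k+1} − β*⟩ is nonnegative and the series is bounded: Σ_{k=0}^∞ ⟨h^{k+1} − h*, β^{k+1} − β*⟩ ≤ (1/(2δ₁))‖u^0 − u*‖₂² + (1/(2δ₂))‖v^0 − v*‖₂² + (μ₁/2)‖a^0 − a*‖₂² + (μ₂/2)‖b^0 − b*‖₂². -/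

import Mathlib

open Filter Matrix Finset

/-- The ℓ1 norm on `Fin d → ℝ`. -/
noncomputable def l1 {d : ℕ} (x : Fin d → ℝ) : ℝ := ∑ i, |x i|

/-- The Euclidean (ℓ2) norm on `Fin d → ℝ`. -/
noncomputable def l2 {d : ℕ} (x : Fin d → ℝ) : ℝ := Real.sqrt (∑ i, (x i) ^ 2)

/-- The Euclidean inner product on `Fin d → ℝ`. -/
def dotp {d : ℕ} (x y : Fin d → ℝ) : ℝ := ∑ i, x i * y i

/-- `g` is a subgradient of `f` at `x`. -/
def IsSubgrad {d : ℕ} (f : (Fin d → ℝ) → ℝ) (x g : Fin d → ℝ) : Prop :=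
  ∀ z, f z ≥ f x + dotp g (z - x)

lemma dotp_comm {d : ℕ} (x y : Fin d → ℝ) : dotp x y = dotp y x := by
  simp [dotp, mul_comm]

lemma dotp_add_left {d : ℕ} (x y z : Fin d → ℝ) : dotp (x + y) z = dotp x z + dotp y z := by
  simp [dotp, add_mul, Finset.sum_add_distrib]

lemma dotp_sub_left {d : ℕ} (x y z : Fin d → ℝ) : dotp (x - y) z = dotp x z - dotp y z := by
  simp [dotp, sub_mul, Finset.sum_sub_distrib]

lemma dotp_neg_left {d : ℕ} (x z : Fin d → ℝ) : dotp (-x) z = - dotp x z := by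
  simp [dotp]

lemma dotp_smul_left {d : ℕ} (c : ℝ) (x z : Fin d → ℝ) : dotp (c • x) z = c * dotp x z := by
  simp [dotp, Finset.mul_sum, mul_assoc]

lemma dotp_add_right {d : ℕ} (x y z : Fin d → ℝ) : dotp z (x + y) = dotp z x + dotp z y := by
  rw [dotp_comm, dotp_add_left, dotp_comm x z, dotp_comm y z]

lemma dotp_sub_right {d : ℕ} (x y z : Fin d → ℝ) : dotp z (x - y) = dotp z x - dotp z y := by
  rw [dotp_comm, dotp_sub_left, dotp_comm x z, dotp_comm y z]

lemma dotp_smul_right {d : ℕ} (c : ℝ) (x z : Fin d → ℝ) : dotp z (c • x) = c * dotp z x := by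
  rw [dotp_comm, dotp_smul_left, dotp_comm x z]

lemma dotp_self_nonneg {d : ℕ} (x : Fin d → ℝ) : 0 ≤ dotp x x :=
  Finset.sum_nonneg fun i _ => mul_self_nonneg _

lemma dotp_adj {m p : ℕ} (L : Matrix (Fin m) (Fin p) ℝ) (w : Fin m → ℝ) (x : Fin p → ℝ) :
    dotp (L.transpose.mulVec w) x = dotp w (L.mulVec x) := by
  simp only [dotp, Matrix.mulVec, dotProduct, Matrix.transpose_apply,
    Finset.sum_mul, Finset.mul_sum]
  rw [Finset.sum_comm]
  refine Finset.sum_congr rfl fun i _ => Finset.sum_congr rfl fun j _ => by ring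

lemma l2_sq {d : ℕ} (x : Fin d → ℝ) : (l2 x) ^ 2 = dotp x x := by
  rw [l2, Real.sq_sqrt (Finset.sum_nonneg fun i _ => sq_nonneg _)]
  simp [dotp, sq]

lemma subgrad_mono {d : ℕ} {f : (Fin d → ℝ) → ℝ} {x1 g1 x2 g2 : Fin d → ℝ}
    (h1 : IsSubgrad f x1 g1) (h2 : IsSubgrad f x2 g2) :
    0 ≤ dotp (g1 - g2) (x1 - x2) := by
  have a := h1 x2
  have b := h2 x1
  have e1 : dotp g1 (x2 - x1) = - dotp g1 (x1 - x2) := by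
    rw [dotp_sub_right, dotp_sub_right]; ring
  rw [dotp_sub_left]
  linarith

lemma dotp_expand {d : ℕ} (c : ℝ) (x y : Fin d → ℝ) :
    dotp (x + c • y) (x + c • y) = dotp x x + 2*c*dotp x y + c^2 * dotp y y := by
  rw [dotp_add_left, dotp_add_right, dotp_add_right, dotp_smul_left, dotp_smul_right,
    dotp_smul_left, dotp_smul_right, dotp_comm y x]
  ring

lemma dotp_half1 {d : ℕ} (x y : Fin d → ℝ) :
    2 * dotp (x - y) x = dotp x x - dotp y y + dotp (x-y) (x-y) := by
  rw [dotp_sub_left, dotp_sub_left, dotp_sub_right, dotp_sub_right, dotp_comm y x]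
  ring

lemma dotp_half2 {d : ℕ} (x y : Fin d → ℝ) :
    2 * dotp (x - y) y = dotp x x - dotp y y - dotp (x-y) (x-y) := by
  rw [dotp_sub_left, dotp_sub_left, dotp_sub_right, dotp_sub_right, dotp_comm y x]
  ring

lemma key_ineq {p m : ℕ} (L : Matrix (Fin m) (Fin p) ℝ)
    {lam1 lam2 mu1 mu2 del1 del2 : ℝ}
    (hmu1 : 0 < mu1) (hmu2 : 0 < mu2)
    (hdel1 : 0 < del1) (hdel1' : del1 ≤ mu1)
    (hdel2 : 0 < del2) (hdel2' : del2 ≤ mu2)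
    (Be A0 A1 U0 U1 hd P1 : Fin p → ℝ) (B0 B1 V0 V1 Q1 : Fin m → ℝ)
    (hU : U1 = U0 + del1 • (Be - A1))
    (hV : V1 = V0 + del2 • (L.mulVec Be - B1))
    (hH : hd = -U0 - L.transpose.mulVec V0 - mu1 • (Be - A0)
      - mu2 • L.transpose.mulVec (L.mulVec Be - B0))
    (hP : lam1 • P1 = U0 + mu1 • (Be - A1))
    (hQ : lam2 • Q1 = V0 + mu2 • (L.mulVec Be - B1))
    (hP1 : 0 ≤ lam1 * dotp P1 A1)
    (hQ1 : 0 ≤ lam2 * dotp Q1 B1) :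
    dotp hd Be ≤
      ((1/(2*del1)) * dotp U0 U0 + (1/(2*del2)) * dotp V0 V0
        + (mu1/2) * dotp A0 A0 + (mu2/2) * dotp B0 B0)
      - ((1/(2*del1)) * dotp U1 U1 + (1/(2*del2)) * dotp V1 V1
        + (mu1/2) * dotp A1 A1 + (mu2/2) * dotp B1 B1) := by
  have S1 : dotp U1 U1 = dotp U0 U0 + 2*del1*dotp U0 (Be - A1)
      + del1^2 * dotp (Be - A1) (Be - A1) := by
    rw [hU, dotp_expand]
  have S2 : dotp V1 V1 = dotp V0 V0 + 2*del2*dotp V0 (L.mulVec Be - B1)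
      + del2^2 * dotp (L.mulVec Be - B1) (L.mulVec Be - B1) := by
    rw [hV, dotp_expand]
  have S3 : dotp hd Be = -(dotp U0 Be) - dotp V0 (L.mulVec Be)
      - mu1 * dotp (Be - A0) Be - mu2 * dotp (L.mulVec Be - B0) (L.mulVec Be) := by
    rw [hH, dotp_sub_left, dotp_sub_left, dotp_sub_left, dotp_neg_left,
      dotp_smul_left, dotp_smul_left, dotp_adj, dotp_adj]
  have S4 : lam1 * dotp P1 A1 = dotp U0 A1 + mu1 * dotp (Be - A1) A1 := by
    have := congrArg (fun w => dotp w A1) hP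
    simpa [dotp_smul_left, dotp_add_left] using this
  have S5 : lam2 * dotp Q1 B1 = dotp V0 B1 + mu2 * dotp (L.mulVec Be - B1) B1 := by
    have := congrArg (fun w => dotp w B1) hQ
    simpa [dotp_smul_left, dotp_add_left] using this
  have SP1 : dotp U0 (Be - A1) = dotp U0 Be - dotp U0 A1 := dotp_sub_right _ _ _
  have SP2 : dotp V0 (L.mulVec Be - B1) = dotp V0 (L.mulVec Be) - dotp V0 B1 :=
    dotp_sub_right _ _ _
  have M1 : mu1 * (2 * dotp (Be - A0) Be)
      = mu1 * (dotp Be Be - dotp A0 A0 + dotp (Be - A0) (Be - A0)) := by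
    rw [dotp_half1]
  have M2 : mu1 * (2 * dotp (Be - A1) A1)
      = mu1 * (dotp Be Be - dotp A1 A1 - dotp (Be - A1) (Be - A1)) := by
    rw [dotp_half2]
  have M3 : mu2 * (2 * dotp (L.mulVec Be - B0) (L.mulVec Be))
      = mu2 * (dotp (L.mulVec Be) (L.mulVec Be) - dotp B0 B0
        + dotp (L.mulVec Be - B0) (L.mulVec Be - B0)) := by
    rw [dotp_half1]
  have M4 : mu2 * (2 * dotp (L.mulVec Be - B1) B1)
      = mu2 * (dotp (L.mulVec Be) (L.mulVec Be) - dotp B1 B1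
        - dotp (L.mulVec Be - B1) (L.mulVec Be - B1)) := by
    rw [dotp_half2]
  have key1 : (1/(2*del1)) * dotp U1 U1 = (1/(2*del1)) * dotp U0 U0
      + dotp U0 (Be - A1) + (del1/2) * dotp (Be - A1) (Be - A1) := by
    rw [S1]; field_simp
  have key2 : (1/(2*del2)) * dotp V1 V1 = (1/(2*del2)) * dotp V0 V0
      + dotp V0 (L.mulVec Be - B1) + (del2/2) * dotp (L.mulVec Be - B1) (L.mulVec Be - B1) := by
    rw [S2]; field_simp
  have N1 : 0 ≤ mu1 * dotp (Be - A0) (Be - A0) := mul_nonneg hmu1.le (dotp_self_nonneg _)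
  have N2 : 0 ≤ mu2 * dotp (L.mulVec Be - B0) (L.mulVec Be - B0) :=
    mul_nonneg hmu2.le (dotp_self_nonneg _)
  have N3 : 0 ≤ (mu1 - del1) * dotp (Be - A1) (Be - A1) :=
    mul_nonneg (by linarith) (dotp_self_nonneg _)
  have N4 : 0 ≤ (mu2 - del2) * dotp (L.mulVec Be - B1) (L.mulVec Be - B1) :=
    mul_nonneg (by linarith) (dotp_self_nonneg _)
  linarith [S3, S4, S5, SP1, SP2, M1, M2, M3, M4, key1, key2, hP1, hQ1, N1, N2, N3, N4]

/-- Nonnegativity of the Bregman-distance terms and boundedness of their series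
along the split Bregman iteration. -/
theorem splitBregman_series_bound
    {p m : ℕ} (hp : 0 < p) (hm : 0 < m)
    (V : (Fin p → ℝ) → ℝ) (hV : ConvexOn ℝ Set.univ V)
    (L : Matrix (Fin m) (Fin p) ℝ)
    (lam1 lam2 mu1 mu2 del1 del2 : ℝ)
    (hlam1 : 0 < lam1) (hlam2 : 0 < lam2)
    (hmu1 : 0 < mu1) (hmu2 : 0 < mu2)
    (hdel1 : 0 < del1) (hdel1' : del1 ≤ mu1)
    (hdel2 : 0 < del2) (hdel2' : del2 ≤ mu2)
    (Beta a u h pp : ℕ → Fin p → ℝ)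
    (b v qq : ℕ → Fin m → ℝ)
    (hh : ∀ k : ℕ, IsSubgrad V (Beta (k+1)) (h (k+1)))
    (hpp : ∀ k : ℕ, IsSubgrad l1 (a (k+1)) (pp (k+1)))
    (hqq : ∀ k : ℕ, IsSubgrad l1 (b (k+1)) (qq (k+1)))
    (iter1 : ∀ k : ℕ, (0 : Fin p → ℝ) =
      h (k+1) + u k + L.transpose.mulVec (v k)
        + mu1 • (Beta (k+1) - a k)
        + mu2 • L.transpose.mulVec (L.mulVec (Beta (k+1)) - b k))
    (iter2 : ∀ k : ℕ, lam1 • pp (k+1) - u k + mu1 • (a (k+1) - Beta (k+1)) = 0)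
    (iter3 : ∀ k : ℕ, lam2 • qq (k+1) - v k + mu2 • (b (k+1) - L.mulVec (Beta (k+1))) = 0)
    (iter4 : ∀ k : ℕ, u (k+1) = u k + del1 • (Beta (k+1) - a (k+1)))
    (iter5 : ∀ k : ℕ, v (k+1) = v k + del2 • (L.mulVec (Beta (k+1)) - b (k+1)))
    (Bstar hstar pstar : Fin p → ℝ) (qstar : Fin m → ℝ)
    (hmin : ∀ x : Fin p → ℝ,
      V Bstar + lam1 * l1 Bstar + lam2 * l1 (L.mulVec Bstar)
        ≤ V x + lam1 * l1 x + lam2 * l1 (L.mulVec x))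
    (hhs : IsSubgrad V Bstar hstar)
    (hps : IsSubgrad l1 Bstar pstar)
    (hqs : IsSubgrad l1 (L.mulVec Bstar) qstar)
    (hopt : hstar + lam1 • pstar + lam2 • L.transpose.mulVec qstar = 0) :
    (∀ k : ℕ, 0 ≤ dotp (h (k+1) - hstar) (Beta (k+1) - Bstar)) ∧
    (∀ K : ℕ, ∑ k ∈ Finset.range K, dotp (h (k+1) - hstar) (Beta (k+1) - Bstar)
      ≤ (1 / (2 * del1)) * (l2 (u 0 - lam1 • pstar)) ^ 2
        + (1 / (2 * del2)) * (l2 (v 0 - lam2 • qstar)) ^ 2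
        + (mu1 / 2) * (l2 (a 0 - Bstar)) ^ 2
        + (mu2 / 2) * (l2 (b 0 - L.mulVec Bstar)) ^ 2) := by
  constructor
  · intro k
    exact subgrad_mono (hh k) hhs
  · set E : ℕ → ℝ := fun j =>
      (1/(2*del1)) * dotp (u j - lam1 • pstar) (u j - lam1 • pstar)
      + (1/(2*del2)) * dotp (v j - lam2 • qstar) (v j - lam2 • qstar)
      + (mu1/2) * dotp (a j - Bstar) (a j - Bstar)
      + (mu2/2) * dotp (b j - L.mulVec Bstar) (b j - L.mulVec Bstar) with hE
    have key : ∀ k : ℕ, dotp (h (k+1) - hstar) (Beta (k+1) - Bstar) ≤ E k - E (k+1) := by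
      intro k
      have hU : u (k+1) - lam1 • pstar = (u k - lam1 • pstar)
          + del1 • ((Beta (k+1) - Bstar) - (a (k+1) - Bstar)) := by
        rw [iter4 k]; module
      have hV' : v (k+1) - lam2 • qstar = (v k - lam2 • qstar)
          + del2 • (L.mulVec (Beta (k+1) - Bstar) - (b (k+1) - L.mulVec Bstar)) := by
        rw [iter5 k]
        simp only [Matrix.mulVec_sub]
        module
      have hH : h (k+1) - hstar = -(u k - lam1 • pstar)
          - L.transpose.mulVec (v k - lam2 • qstar)
          - mu1 • ((Beta (k+1) - Bstar) - (a k - Bstar))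
          - mu2 • L.transpose.mulVec
              (L.mulVec (Beta (k+1) - Bstar) - (b k - L.mulVec Bstar)) := by
        have e1 := iter1 k
        simp only [Matrix.mulVec_sub, Matrix.mulVec_smul] at e1 ⊢
        linear_combination (norm := module) -e1 - hopt
      have hP : lam1 • (pp (k+1) - pstar) = (u k - lam1 • pstar)
          + mu1 • ((Beta (k+1) - Bstar) - (a (k+1) - Bstar)) := by
        linear_combination (norm := module) iter2 k
      have hQ : lam2 • (qq (k+1) - qstar) = (v k - lam2 • qstar)
          + mu2 • (L.mulVec (Beta (k+1) - Bstar) - (b (k+1) - L.mulVec Bstar)) := by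
        simp only [Matrix.mulVec_sub]
        linear_combination (norm := module) iter3 k
      have hP1 : 0 ≤ lam1 * dotp (pp (k+1) - pstar) (a (k+1) - Bstar) :=
        mul_nonneg hlam1.le (subgrad_mono (hpp k) hps)
      have hQ1 : 0 ≤ lam2 * dotp (qq (k+1) - qstar) (b (k+1) - L.mulVec Bstar) :=
        mul_nonneg hlam2.le (subgrad_mono (hqq k) hqs)
      have := key_ineq L hmu1 hmu2 hdel1 hdel1' hdel2 hdel2'
        (Beta (k+1) - Bstar) (a k - Bstar) (a (k+1) - Bstar)
        (u k - lam1 • pstar) (u (k+1) - lam1 • pstar)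
        (h (k+1) - hstar) (pp (k+1) - pstar)
        (b k - L.mulVec Bstar) (b (k+1) - L.mulVec Bstar)
        (v k - lam2 • qstar) (v (k+1) - lam2 • qstar)
        (qq (k+1) - qstar)
        hU hV' hH hP hQ hP1 hQ1
      simpa [hE] using this
    have Enn : ∀ j : ℕ, 0 ≤ E j := by
      intro j
      rw [hE]
      refine add_nonneg (add_nonneg (add_nonneg ?_ ?_) ?_) ?_ <;>
        exact mul_nonneg (by positivity) (dotp_self_nonneg _)
    intro K
    calc ∑ k ∈ Finset.range K, dotp (h (k+1) - hstar) (Beta (k+1) - Bstar)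
        ≤ ∑ k ∈ Finset.range K, (E k - E (k+1)) :=
          Finset.sum_le_sum fun k _ => key k
      _ = E 0 - E K := Finset.sum_range_sub' E K
      _ ≤ E 0 := by linarith [Enn K]
      _ = _ := by rw [hE]; simp only [l2_sq]
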